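/- Under the assumptions of the anchored pointwise error theorem but with condition (iii) replaced by: the top-k average of the per-sample losses ℓ^near_j := (1/R)·max{(ỹ_j − ỹ_{i⁺(j)})₊, (ỹ_{i⁻(j)} − ỹ_j)₊} over j ∉ S is at most δ, the pointwise error satisfies max_{j∈[N]} |ỹ_j − y_j| ≤ ε + η + R·k·δ. -/
import Mathlib


/-- Anchored pointwise error bound with top-k surrogate: if the top-k average of
the per-sample anchored hinge losses ℓ^near over the non-anchors is at most δ,
then the pointwise error is at most ε + η + R·k·δ. -/
theorem anchored_pointwise_error_bound_topk
    (N : ℕ) (y ty : Fin N → ℝ) (S : Finset (Fin N))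
    (im ip : Fin N → Fin N) (ε η R δ : ℝ)
    (hR : 0 < R) (hη : 0 ≤ η) (hδ : 0 ≤ δ)
    (hanchor : ∀ i ∈ S, |ty i - y i| ≤ ε)
    (hcover : ∀ j ∉ S, im j ∈ S ∧ ip j ∈ S ∧
      y (im j) ≤ y j ∧ y j ≤ y (ip j) ∧
      y j - y (im j) ≤ η ∧ y (ip j) - y j ≤ η)
    -- g enumerates the non-anchors in order of decreasing per-sample loss L
    (n : ℕ) (g : Fin n → Fin N)
    (hginj : Function.Injective g) (hgmem : ∀ r, g r ∉ S)
    (hgsurj : ∀ j ∉ S, ∃ r, g r = j)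
    (L : Fin n → ℝ)
    (hL : ∀ r, L r = (1 / R) *
      max (max 0 (ty (g r) - ty (ip (g r)))) (max 0 (ty (im (g r)) - ty (g r))))
    (hsorted : Antitone L)
    (k : ℕ) (hk1 : 1 ≤ k) (hkn : k ≤ n)
    (htopk : (1 / (k : ℝ)) * ∑ r : Fin k, L (Fin.castLE hkn r) ≤ δ) :
    ∀ j, |ty j - y j| ≤ ε + η + R * (k : ℝ) * δ := by
  intro j
  have hRk : 0 ≤ R * (k : ℝ) * δ := by positivity
  by_cases hjS : j ∈ S
  · have h := hanchor j hjS
    have h2 := abs_le.mp h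
    rw [abs_le]; constructor <;> linarith
  · obtain ⟨r, hr⟩ := hgsurj j hjS
    have hk0 : (0:ℝ) < k := by exact_mod_cast hk1
    have hL0 : ∀ s : Fin n, 0 ≤ L s := by
      intro s; rw [hL]; positivity
    have hsum : ∑ s : Fin k, L (Fin.castLE hkn s) ≤ (k : ℝ) * δ := by
      have h := mul_le_mul_of_nonneg_left htopk hk0.le
      rw [← mul_assoc, mul_one_div_cancel hk0.ne', one_mul] at h
      exact h
    have key : L r ≤ (k : ℝ) * δ := by
      have h1 : L r ≤ L (Fin.castLE hkn ⟨0, hk1⟩) := by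
        apply hsorted; simp [Fin.le_def]
      have h2 : L (Fin.castLE hkn ⟨0, hk1⟩) ≤ ∑ s : Fin k, L (Fin.castLE hkn s) :=
        Finset.single_le_sum (fun s _ => hL0 _) (Finset.mem_univ _)
      linarith
    have hLr := hL r
    rw [hr] at hLr
    set M := max (max 0 (ty j - ty (ip j))) (max 0 (ty (im j) - ty j)) with hM
    have hMeq : M = R * L r := by
      rw [hLr, ← mul_assoc, mul_one_div_cancel hR.ne', one_mul]
    have hMle : M ≤ R * (k : ℝ) * δ := by
      rw [hMeq, mul_assoc]
      exact mul_le_mul_of_nonneg_left key hR.le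
    have h1 : ty j - ty (ip j) ≤ M :=
      le_trans (le_max_right 0 _) (le_max_left _ _)
    have h2 : ty (im j) - ty j ≤ M :=
      le_trans (le_max_right 0 _) (le_max_right _ _)
    obtain ⟨hm, hp, hym, hyp, hηm, hηp⟩ := hcover j hjS
    have ham := abs_le.mp (hanchor _ hm)
    have hap := abs_le.mp (hanchor _ hp)
    rw [abs_le]
    constructor <;> linarith
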